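/- If a randomized mechanism M satisfies (α, ε)-Rényi differential privacy for some α > 1, then M satisfies (ε + log(1/δ)/(α−1), δ)-differential privacy for every δ ∈ (0,1). -/

import Mathlib

open MeasureTheory

noncomputable section

/-- `(α, ε)`-Rényi-divergence bound between two measures `Pd` and `Q`:
`D_α(Pd‖Q) = (1/(α−1)) log E_Q[(dPd/dQ)^α] ≤ ε`, encoded (for `α > 1`) as
`∫⁻ (dPd/dQ)^α dQ ≤ exp((α−1) ε)`. -/
def RenyiBound {Y : Type*} [MeasurableSpace Y] (α ε : ℝ) (Pd Q : Measure Y) : Prop :=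
  ∫⁻ y, Pd.rnDeriv Q y ^ α ∂Q ≤ ENNReal.ofReal (Real.exp ((α - 1) * ε))

/-- RDP-to-DP conversion: if a mechanism `M` is `(α,ε)`-Rényi differentially
private for some `α > 1`, then for every `δ ∈ (0,1)` it is
`(ε + log(1/δ)/(α−1), δ)`-differentially private. -/
theorem rdp_implies_dp {X Y : Type*} [MeasurableSpace Y]
    (M : X → Measure Y) (Neighbor : X → X → Prop)
    (hprob : ∀ x, IsProbabilityMeasure (M x))
    (α ε : ℝ) (hα : 1 < α)
    (hAC : ∀ x x', Neighbor x x' → M x ≪ M x')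
    (hRDP : ∀ x x', Neighbor x x' → RenyiBound α ε (M x) (M x'))
    (δ : ℝ) (hδ : δ ∈ Set.Ioo (0 : ℝ) 1) :
    ∀ x x', Neighbor x x' → ∀ S : Set Y, MeasurableSet S →
      M x S ≤ ENNReal.ofReal (Real.exp (ε + Real.log (1 / δ) / (α - 1))) * M x' S
        + ENNReal.ofReal δ := by
  obtain ⟨hδ0, hδ1⟩ := hδ
  intro x x' hN S hS
  have hP := hprob x
  have hQ := hprob x'
  have hac := hAC x x' hN
  have hR := hRDP x x' hN
  set P := M x with hPdef
  set Q := M x' with hQdef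
  set f := P.rnDeriv Q with hfdef
  have hfm : Measurable f := Measure.measurable_rnDeriv P Q
  have hα1 : (0:ℝ) < α - 1 := by linarith
  set t : ℝ := Real.exp (ε + Real.log (1 / δ) / (α - 1)) with htdef
  have htpos : 0 < t := Real.exp_pos _
  set T : ENNReal := ENNReal.ofReal t with hTdef
  have hT0 : T ≠ 0 := by
    simp [hTdef, ENNReal.ofReal_pos.mpr htpos, (ENNReal.ofReal_pos.mpr htpos).ne']
  have hTtop : T ≠ ⊤ := ENNReal.ofReal_ne_top
  have hTpow0 : T ^ (α - 1) ≠ 0 := by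
    exact (ENNReal.rpow_pos (bot_lt_iff_ne_bot.mpr hT0) hTtop).ne'
  have hTpowtop : T ^ (α - 1) ≠ ⊤ := by
    exact ENNReal.rpow_ne_top_of_nonneg hα1.le hTtop
  set A : Set Y := {y | T < f y} with hAdef
  have hAm : MeasurableSet A := measurableSet_lt measurable_const hfm
  have hPS : P S = ∫⁻ y in S, f y ∂Q := (Measure.setLIntegral_rnDeriv hac S).symm
  -- pointwise bound on A
  have hpt : ∀ y ∈ A, f y * T ^ (α - 1) ≤ f y ^ α := by
    intro y hy
    have hTy : T < f y := hy
    by_cases hfy : f y = ⊤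
    · rw [hfy, ENNReal.top_rpow_of_pos (by linarith : (0:ℝ) < α)]
      exact le_top
    · have hfy0 : f y ≠ 0 := (lt_of_le_of_lt (zero_le : (0:ENNReal) ≤ T) hTy).ne'
      calc f y * T ^ (α - 1) ≤ f y * f y ^ (α - 1) :=
            mul_le_mul_right (ENNReal.rpow_le_rpow hTy.le hα1.le) _
        _ = f y ^ (1 : ℝ) * f y ^ (α - 1) := by rw [ENNReal.rpow_one]
        _ = f y ^ (1 + (α - 1)) := (ENNReal.rpow_add _ _ hfy0 hfy).symm
        _ = f y ^ α := by ring_nf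
  -- integral over A is small
  have hIntA : ∫⁻ y in A, f y ∂Q ≤ ENNReal.ofReal δ := by
    have h1 : (∫⁻ y in A, f y ∂Q) * T ^ (α - 1)
        ≤ ∫⁻ y in A, f y ^ α ∂Q := by
      rw [← lintegral_mul_const' (T ^ (α - 1)) _ hTpowtop]
      exact setLIntegral_mono' hAm hpt
    have h2 : ∫⁻ y in A, f y ^ α ∂Q ≤ ENNReal.ofReal (Real.exp ((α - 1) * ε)) :=
      le_trans (setLIntegral_le_lintegral _ _) hR
    have h3 : (∫⁻ y in A, f y ∂Q) ≤ ENNReal.ofReal (Real.exp ((α - 1) * ε)) / T ^ (α - 1) :=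
      (ENNReal.le_div_iff_mul_le (Or.inl hTpow0) (Or.inl hTpowtop)).mpr (h1.trans h2)
    refine h3.trans (le_of_eq ?_)
    have hTpow : T ^ (α - 1) = ENNReal.ofReal (t ^ (α - 1)) :=
      ENNReal.ofReal_rpow_of_pos htpos
    rw [hTpow, ← ENNReal.ofReal_div_of_pos (Real.rpow_pos_of_pos htpos _)]
    congr 1
    rw [htdef, ← Real.exp_mul, ← Real.exp_sub]
    have : (α - 1) * ε - (ε + Real.log (1 / δ) / (α - 1)) * (α - 1)
        = -Real.log (1 / δ) := by field_simp; ring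
    rw [this, Real.log_div one_ne_zero hδ0.ne', Real.log_one]
    simp [Real.exp_log hδ0]
  -- integral over S \ A
  have hIntSc : ∫⁻ y in S \ A, f y ∂Q ≤ T * Q S := by
    calc ∫⁻ y in S \ A, f y ∂Q ≤ ∫⁻ _ in S \ A, T ∂Q := by
          refine setLIntegral_mono' (hS.diff hAm) fun y hy => ?_
          exact not_lt.mp hy.2
      _ = T * Q (S \ A) := by rw [setLIntegral_const]
      _ ≤ T * Q S := mul_le_mul_right (measure_mono Set.diff_subset) _
  calc P S = ∫⁻ y in S, f y ∂Q := hPS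
    _ = ∫⁻ y in S ∩ A, f y ∂Q + ∫⁻ y in S \ A, f y ∂Q :=
        (lintegral_inter_add_diff _ _ hAm).symm
    _ ≤ ENNReal.ofReal δ + T * Q S := by
        exact add_le_add (le_trans (lintegral_mono_set Set.inter_subset_right) hIntA) hIntSc
    _ = T * Q S + ENNReal.ofReal δ := add_comm _ _
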